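/- For all u, v ∈ ℝ and all z in the complex upper half-plane, the Siegel phi-function satisfies φ(u+1, v, z) = −e^{−πiv}·φ(u, v, z). -/

import Mathlib

open Complex Real

/-- The Siegel phi-function: for `u v : ℝ` and `z` in the upper half-plane, with
`γ = u·z + v`,
`φ(u,v,z) = -i·e^{πiz/6}·e^{πiuγ}·(e^{πiγ} - e^{-πiγ})·∏_{n≥1}(1-e^{2πi(nz+γ)})(1-e^{2πi(nz-γ)})`. -/
noncomputable def siegelPhi (u v : ℝ) (z : ℂ) : ℂ :=
  -I * Complex.exp ((π : ℂ) * I * z / 6) *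
    Complex.exp ((π : ℂ) * I * (u : ℂ) * ((u : ℂ) * z + (v : ℂ))) *
    (Complex.exp ((π : ℂ) * I * ((u : ℂ) * z + (v : ℂ))) -
      Complex.exp (-((π : ℂ) * I * ((u : ℂ) * z + (v : ℂ))))) *
    ∏' n : ℕ+,
      (1 - Complex.exp (2 * (π : ℂ) * I * ((n : ℂ) * z + ((u : ℂ) * z + (v : ℂ))))) *
      (1 - Complex.exp (2 * (π : ℂ) * I * ((n : ℂ) * z - ((u : ℂ) * z + (v : ℂ)))))

open Filter in
lemma multipliable_one_sub_mul_pow (c w : ℂ) (hw : ‖w‖ < 1) :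
    Multipliable fun n : ℕ => 1 - c * w ^ n := by
  by_cases h0 : ∃ n, 1 - c * w ^ n = 0
  · obtain ⟨n, hn⟩ := h0
    refine ⟨0, ?_⟩
    have hev : (fun s : Finset ℕ => ∏ i ∈ s, (1 - c * w ^ i)) =ᶠ[atTop] fun _ => 0 := by
      refine Filter.eventually_atTop.2 ⟨{n}, fun s hs => ?_⟩
      exact Finset.prod_eq_zero (hs (Finset.mem_singleton_self n)) hn
    exact (tendsto_congr' hev).2 tendsto_const_nhds
  · push_neg at h0
    have hsum : Summable fun n : ℕ => Complex.log (1 - c * w ^ n) := by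
      have hgeo : Summable fun n : ℕ => 3 / 2 * (‖c‖ * ‖w‖ ^ n) :=
        ((summable_geometric_of_lt_one (norm_nonneg w) hw).mul_left ‖c‖).mul_left _
      refine Summable.of_norm_bounded_eventually_nat hgeo ?_
      have htend : Tendsto (fun n : ℕ => ‖c‖ * ‖w‖ ^ n) atTop (nhds 0) := by
        simpa using
          (tendsto_pow_atTop_nhds_zero_of_lt_one (norm_nonneg w) hw).const_mul ‖c‖
      filter_upwards [htend.eventually_lt_const (by norm_num : (0:ℝ) < 1/2)] with n hn
      have hnorm : ‖-(c * w ^ n)‖ ≤ 1 / 2 := by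
        rw [norm_neg, norm_mul, norm_pow]; exact hn.le
      have := Complex.norm_log_one_add_half_le_self hnorm
      calc ‖Complex.log (1 - c * w ^ n)‖
          = ‖Complex.log (1 + -(c * w ^ n))‖ := by ring_nf
        _ ≤ 3 / 2 * ‖-(c * w ^ n)‖ := this
        _ = 3 / 2 * (‖c‖ * ‖w‖ ^ n) := by rw [norm_neg, norm_mul, norm_pow]
    exact Complex.multipliable_of_summable_log hsum

lemma siegel_key_prod (a b w : ℂ) (hw : ‖w‖ < 1) :
    (1 - a * w) * ∏' m : ℕ, ((1 - a * w ^ (m + 2)) * (1 - b * w ^ m)) =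
    (1 - b) * ∏' m : ℕ, ((1 - a * w ^ (m + 1)) * (1 - b * w ^ (m + 1))) := by
  have hA2 : Multipliable fun m : ℕ => 1 - a * w ^ (m + 2) :=
    (multipliable_one_sub_mul_pow (a * w ^ 2) w hw).congr fun m => by ring_nf
  have hA1 : Multipliable fun m : ℕ => 1 - a * w ^ (m + 1) :=
    (multipliable_one_sub_mul_pow (a * w) w hw).congr fun m => by ring_nf
  have hB1 : Multipliable fun m : ℕ => 1 - b * w ^ (m + 1) :=
    (multipliable_one_sub_mul_pow (b * w) w hw).congr fun m => by ring_nf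
  have hB0 : Multipliable fun m : ℕ => 1 - b * w ^ m :=
    multipliable_one_sub_mul_pow b w hw
  rw [hA2.tprod_mul hB0, hA1.tprod_mul hB1]
  have h1 : ∏' m : ℕ, (1 - b * w ^ m) = (1 - b) * ∏' m : ℕ, (1 - b * w ^ (m + 1)) := by
    simpa using tprod_eq_zero_mul' (f := fun m : ℕ => 1 - b * w ^ m) hB1
  have h2 : ∏' m : ℕ, (1 - a * w ^ (m + 1)) =
      (1 - a * w) * ∏' m : ℕ, (1 - a * w ^ (m + 2)) := by
    have := tprod_eq_zero_mul' (f := fun m : ℕ => 1 - a * w ^ (m + 1))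
      (hA2.congr fun m => by ring_nf)
    simpa using this
  rw [h1, h2]; ring

/-- `φ(u+1, v, z) = -e^{-πiv}·φ(u, v, z)`. -/
theorem siegelPhi_u_add_one (u v : ℝ) (z : ℂ) (hz : 0 < z.im) :
    siegelPhi (u + 1) v z = -Complex.exp (-((π : ℂ) * I * (v : ℂ))) * siegelPhi u v z := by
  have hre : (2 * (π : ℂ) * I * z).re = -(2 * π * z.im) := by
    simp [Complex.mul_re, Complex.mul_im]
  have hw : ‖Complex.exp (2 * (π : ℂ) * I * z)‖ < 1 := by
    rw [Complex.norm_exp, hre, Real.exp_lt_one_iff]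
    have : 0 < 2 * π * z.im := by positivity
    linarith
  have hcast : ∀ m : ℕ, ((Equiv.pnatEquivNat.symm m : ℕ+) : ℂ) = (m : ℂ) + 1 := by
    intro m
    simp [Equiv.pnatEquivNat]
  have hL : (∏' n : ℕ+,
      (1 - Complex.exp (2 * (π : ℂ) * I * ((n : ℂ) * z + (((u + 1 : ℝ) : ℂ) * z + (v : ℂ))))) *
      (1 - Complex.exp (2 * (π : ℂ) * I * ((n : ℂ) * z - (((u + 1 : ℝ) : ℂ) * z + (v : ℂ)))))) =
      ∏' m : ℕ,
      ((1 - Complex.exp (2 * (π : ℂ) * I * ((u : ℂ) * z + (v : ℂ))) *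
          Complex.exp (2 * (π : ℂ) * I * z) ^ (m + 2)) *
       (1 - Complex.exp (-(2 * (π : ℂ) * I * ((u : ℂ) * z + (v : ℂ)))) *
          Complex.exp (2 * (π : ℂ) * I * z) ^ m)) := by
    rw [← Equiv.tprod_eq Equiv.pnatEquivNat.symm]
    refine tprod_congr fun m => ?_
    rw [hcast m]
    simp only [← Complex.exp_nat_mul, ← Complex.exp_add]
    congr 3 <;> push_cast <;> ring
  have hR : (∏' n : ℕ+,
      (1 - Complex.exp (2 * (π : ℂ) * I * ((n : ℂ) * z + ((u : ℂ) * z + (v : ℂ))))) *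
      (1 - Complex.exp (2 * (π : ℂ) * I * ((n : ℂ) * z - ((u : ℂ) * z + (v : ℂ)))))) =
      ∏' m : ℕ,
      ((1 - Complex.exp (2 * (π : ℂ) * I * ((u : ℂ) * z + (v : ℂ))) *
          Complex.exp (2 * (π : ℂ) * I * z) ^ (m + 1)) *
       (1 - Complex.exp (-(2 * (π : ℂ) * I * ((u : ℂ) * z + (v : ℂ)))) *
          Complex.exp (2 * (π : ℂ) * I * z) ^ (m + 1))) := by
    rw [← Equiv.tprod_eq Equiv.pnatEquivNat.symm]
    refine tprod_congr fun m => ?_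
    rw [hcast m]
    simp only [← Complex.exp_nat_mul, ← Complex.exp_add]
    congr 3 <;> push_cast <;> ring
  have hkey := siegel_key_prod (Complex.exp (2 * (π : ℂ) * I * ((u : ℂ) * z + (v : ℂ))))
    (Complex.exp (-(2 * (π : ℂ) * I * ((u : ℂ) * z + (v : ℂ)))))
    (Complex.exp (2 * (π : ℂ) * I * z)) hw
  have hfac : Complex.exp ((π : ℂ) * I * (((u + 1 : ℝ) : ℂ) * z + (v : ℂ))) -
      Complex.exp (-((π : ℂ) * I * (((u + 1 : ℝ) : ℂ) * z + (v : ℂ)))) =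
      -Complex.exp (-((π : ℂ) * I * (((u + 1 : ℝ) : ℂ) * z + (v : ℂ)))) *
        (1 - Complex.exp (2 * (π : ℂ) * I * ((u : ℂ) * z + (v : ℂ))) *
          Complex.exp (2 * (π : ℂ) * I * z)) := by
    have hsq : Complex.exp (2 * (π : ℂ) * I * ((u : ℂ) * z + (v : ℂ))) *
        Complex.exp (2 * (π : ℂ) * I * z) =
        Complex.exp ((π : ℂ) * I * (((u + 1 : ℝ) : ℂ) * z + (v : ℂ))) *
        Complex.exp ((π : ℂ) * I * (((u + 1 : ℝ) : ℂ) * z + (v : ℂ))) := by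
      simp only [← Complex.exp_add]
      congr 1
      push_cast
      ring
    rw [hsq, Complex.exp_neg]
    have ht := Complex.exp_ne_zero ((π : ℂ) * I * (((u + 1 : ℝ) : ℂ) * z + (v : ℂ)))
    field_simp
    ring
  have h1 : Complex.exp ((π : ℂ) * I * ((u + 1 : ℝ) : ℂ) * (((u + 1 : ℝ) : ℂ) * z + (v : ℂ))) *
      Complex.exp (-((π : ℂ) * I * (((u + 1 : ℝ) : ℂ) * z + (v : ℂ)))) =
      Complex.exp (-((π : ℂ) * I * (v : ℂ))) *
        (Complex.exp ((π : ℂ) * I * (u : ℂ) * ((u : ℂ) * z + (v : ℂ))) *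
          Complex.exp ((π : ℂ) * I * ((u : ℂ) * z + (v : ℂ)))) := by
    simp only [← Complex.exp_add]
    congr 1
    push_cast
    ring
  have h2 : Complex.exp ((π : ℂ) * I * ((u + 1 : ℝ) : ℂ) * (((u + 1 : ℝ) : ℂ) * z + (v : ℂ))) *
      Complex.exp (-((π : ℂ) * I * (((u + 1 : ℝ) : ℂ) * z + (v : ℂ)))) *
      Complex.exp (-(2 * (π : ℂ) * I * ((u : ℂ) * z + (v : ℂ)))) =
      Complex.exp (-((π : ℂ) * I * (v : ℂ))) *
        (Complex.exp ((π : ℂ) * I * (u : ℂ) * ((u : ℂ) * z + (v : ℂ))) *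
          Complex.exp (-((π : ℂ) * I * ((u : ℂ) * z + (v : ℂ))))) := by
    simp only [← Complex.exp_add]
    congr 1
    push_cast
    ring
  simp only [siegelPhi]
  rw [hL, hR, hfac]
  set PX := ∏' m : ℕ,
      ((1 - Complex.exp (2 * (π : ℂ) * I * ((u : ℂ) * z + (v : ℂ))) *
          Complex.exp (2 * (π : ℂ) * I * z) ^ (m + 2)) *
       (1 - Complex.exp (-(2 * (π : ℂ) * I * ((u : ℂ) * z + (v : ℂ)))) *
          Complex.exp (2 * (π : ℂ) * I * z) ^ m)) with hPX
  set PY := ∏' m : ℕ,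
      ((1 - Complex.exp (2 * (π : ℂ) * I * ((u : ℂ) * z + (v : ℂ))) *
          Complex.exp (2 * (π : ℂ) * I * z) ^ (m + 1)) *
       (1 - Complex.exp (-(2 * (π : ℂ) * I * ((u : ℂ) * z + (v : ℂ)))) *
          Complex.exp (2 * (π : ℂ) * I * z) ^ (m + 1))) with hPY
  linear_combination (I * Complex.exp ((π : ℂ) * I * z / 6) *
      Complex.exp ((π : ℂ) * I * ((u + 1 : ℝ) : ℂ) * (((u + 1 : ℝ) : ℂ) * z + (v : ℂ))) *
      Complex.exp (-((π : ℂ) * I * (((u + 1 : ℝ) : ℂ) * z + (v : ℂ))))) * hkey +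
    (I * Complex.exp ((π : ℂ) * I * z / 6) * PY) * h1 -
    (I * Complex.exp ((π : ℂ) * I * z / 6) * PY) * h2
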